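/- For S a finite sum of independent Bernoulli(p_i) variables (i = 1,…,n), the probability function f(k) = P(S=k) is ultra log-concave: k f(k)² ≥ (k+1) f(k-1) f(k+1) for all k ≥ 1. -/

import Mathlib

open Finset

/-- Probability function of a sum of n independent Bernoulli(p i) variables:
P(S = k) = Σ over k-subsets A of {0,…,n-1} of Π_{i∈A} p i · Π_{i∉A} (1 - p i). -/
noncomputable def pbPMF (n : ℕ) (p : ℕ → ℝ) (k : ℕ) : ℝ :=
  ∑ A ∈ (Finset.range n).powersetCard k,
    (∏ i ∈ A, p i) * ∏ i ∈ Finset.range n \ A, (1 - p i)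

/-- Probability function of X + Σ B_i with X ~ Poisson(λ) independent of the
Bernoulli variables. -/
noncomputable def epbPMF (lam : ℝ) (n : ℕ) (p : ℕ → ℝ) (k : ℕ) : ℝ :=
  ∑ j ∈ Finset.range (k + 1),
    Real.exp (-lam) * lam ^ (k - j) / (Nat.factorial (k - j)) * pbPMF n p j

lemma pb_zero (n : ℕ) (p : ℕ → ℝ) :
    pbPMF (n+1) p 0 = (1 - p n) * pbPMF n p 0 := by
  simp [pbPMF, Finset.powersetCard_zero, Finset.range_add_one,
    Finset.prod_insert (Finset.notMem_range_self)]

lemma pb_rec (n : ℕ) (p : ℕ → ℝ) (k : ℕ) :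
    pbPMF (n+1) p (k+1) = p n * pbPMF n p k + (1 - p n) * pbPMF n p (k+1) := by
  have hn : n ∉ Finset.range n := Finset.notMem_range_self
  have hsplit := Finset.powersetCard_succ_insert hn k
  have h1 : ∑ A ∈ (Finset.range n).powersetCard (k+1),
      (∏ i ∈ A, p i) * ∏ i ∈ insert n (Finset.range n) \ A, (1 - p i)
      = (1 - p n) * pbPMF n p (k+1) := by
    rw [pbPMF, Finset.mul_sum]
    apply Finset.sum_congr rfl
    intro A hA
    rw [Finset.mem_powersetCard] at hA
    have hnA : n ∉ A := fun h => hn (hA.1 h)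
    have : insert n (Finset.range n) \ A = insert n (Finset.range n \ A) := by
      ext x; simp only [Finset.mem_sdiff, Finset.mem_insert]
      constructor
      · rintro ⟨h1 | h1, h2⟩ <;> simp_all
      · rintro (rfl | ⟨h1, h2⟩) <;> simp_all
    rw [this, Finset.prod_insert (by simp [hnA])]
    ring
  have h2 : ∑ A ∈ ((Finset.range n).powersetCard k).image (insert n),
      (∏ i ∈ A, p i) * ∏ i ∈ insert n (Finset.range n) \ A, (1 - p i)
      = p n * pbPMF n p k := by
    rw [Finset.sum_image, pbPMF, Finset.mul_sum]
    · apply Finset.sum_congr rfl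
      intro A hA
      rw [Finset.mem_powersetCard] at hA
      have hnA : n ∉ A := fun h => hn (hA.1 h)
      have hd : insert n (Finset.range n) \ insert n A = Finset.range n \ A := by
        ext x; simp only [Finset.mem_sdiff, Finset.mem_insert, not_or]
        constructor
        · rintro ⟨h1 | h1, h2, h3⟩ <;> simp_all
        · rintro ⟨h1, h2⟩
          refine ⟨Or.inr h1, fun h => ?_, h2⟩
          subst h; exact hn h1
      rw [hd, Finset.prod_insert hnA]
      ring
    · intro A hA B hB hAB
      rw [Finset.mem_coe, Finset.mem_powersetCard] at hA hB
      have hnA : n ∉ A := fun h => hn (hA.1 h)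
      have hnB : n ∉ B := fun h => hn (hB.1 h)
      have := congrArg (Finset.erase · n) hAB
      simpa [Finset.erase_insert hnA, Finset.erase_insert hnB] using this
  have hdisj : Disjoint ((Finset.range n).powersetCard (k+1))
      (((Finset.range n).powersetCard k).image (insert n)) := by
    rw [Finset.disjoint_left]
    rintro A hA hA'
    rw [Finset.mem_image] at hA'
    obtain ⟨B, hB, rfl⟩ := hA'
    rw [Finset.mem_powersetCard] at hA
    exact hn (hA.1 (Finset.mem_insert_self n B))
  rw [pbPMF, Finset.range_add_one, hsplit, Finset.sum_union hdisj, h1, h2]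
  ring

lemma pb_nonneg (n : ℕ) (p : ℕ → ℝ) (hp : ∀ i, 0 ≤ p i ∧ p i ≤ 1) (k : ℕ) :
    0 ≤ pbPMF n p k := by
  apply Finset.sum_nonneg
  intro A hA
  apply mul_nonneg (Finset.prod_nonneg fun i _ => (hp i).1)
    (Finset.prod_nonneg fun i _ => by linarith [(hp i).2])

lemma pb_pos (n : ℕ) (p : ℕ → ℝ) (hp : ∀ i, 0 < p i ∧ p i < 1) (k : ℕ) (hk : k ≤ n) :
    0 < pbPMF n p k := by
  apply Finset.sum_pos'
  · intro A hA
    apply mul_nonneg (Finset.prod_nonneg fun i _ => (hp i).1.le)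
      (Finset.prod_nonneg fun i _ => by linarith [(hp i).2])
  · obtain ⟨A, hA1, hA2⟩ := Finset.exists_subset_card_eq (by simpa using hk : k ≤ (Finset.range n).card)
    refine ⟨A, Finset.mem_powersetCard.2 ⟨hA1, hA2⟩, ?_⟩
    apply mul_pos (Finset.prod_pos fun i _ => (hp i).1)
      (Finset.prod_pos fun i _ => by linarith [(hp i).2])

lemma pb_eq_zero (n : ℕ) (p : ℕ → ℝ) (k : ℕ) (hk : n < k) : pbPMF n p k = 0 := by
  rw [pbPMF, Finset.powersetCard_eq_empty.2 (by simpa using hk), Finset.sum_empty]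

lemma step_ineq (K a b u v w x : ℝ) (ha : 0 ≤ a) (hb : 0 ≤ b)
    (P1 : (K+1)*(u*w) ≤ K*v^2) (P2 : (K+1)*(u*x) ≤ (K-1)*(v*w)) (P3 : (K+1)*(v*x) ≤ K*w^2) :
    (K+1) * (a*u+b*v) * (a*w+b*x) ≤ K * (a*v+b*w)^2 := by
  have E1 := mul_le_mul_of_nonneg_left P1 (sq_nonneg a)
  have E2 := mul_le_mul_of_nonneg_left P2 (mul_nonneg ha hb)
  have E3 := mul_le_mul_of_nonneg_left P3 (sq_nonneg b)
  nlinarith [E1, E2, E3]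

lemma ulc_interior (n : ℕ) : ∀ (p : ℕ → ℝ), (∀ i, 0 < p i ∧ p i < 1) →
    ∀ k : ℕ, 1 ≤ k →
      ((k + 1 : ℝ)) * pbPMF n p (k - 1) * pbPMF n p (k + 1) ≤ (k : ℝ) * (pbPMF n p k) ^ 2 := by
  induction n with
  | zero =>
    intro p hp k hk
    have h1 : pbPMF 0 p (k+1) = 0 := pb_eq_zero 0 p (k+1) (by omega)
    have h2 : 0 ≤ pbPMF 0 p k := pb_nonneg 0 p (fun i => ⟨(hp i).1.le, (hp i).2.le⟩) k
    rw [h1]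
    have : (0:ℝ) ≤ (k:ℝ) * pbPMF 0 p k ^ 2 := by positivity
    linarith
  | succ n IH =>
    intro p hp k hk
    have hp' : ∀ i, 0 ≤ p i ∧ p i ≤ 1 := fun i => ⟨(hp i).1.le, (hp i).2.le⟩
    set q := p n with hq
    have hq0 : 0 < q := (hp n).1
    have hq1 : q < 1 := (hp n).2
    have hf0 : ∀ j, 0 ≤ pbPMF n p j := pb_nonneg n p hp'
    match k, hk with
    | 1, _ =>
      -- goal: 2 * g 0 * g 2 ≤ 1 * g 1 ^ 2
      have hrec1 := pb_rec n p 0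
      have hrec2 := pb_rec n p 1
      have h0 := pb_zero n p
      have hulc := IH p hp 1 le_rfl
      simp only [Nat.sub_self] at hulc ⊢
      norm_num at hulc ⊢
      rw [h0, hrec1, hrec2]
      nlinarith [hf0 0, hf0 1, hf0 2, sq_nonneg (q * pbPMF n p 0),
        mul_nonneg (mul_nonneg (sq_nonneg (1-q)) (hf0 0)) (hf0 2)]
    | (m+2), _ =>
      have u := pbPMF n p m
      set fu := pbPMF n p m with hfu
      set fv := pbPMF n p (m+1) with hfv
      set fw := pbPMF n p (m+2) with hfw
      set fx := pbPMF n p (m+3) with hfx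
      have H1 := IH p hp (m+1) (by omega)
      have H2 := IH p hp (m+2) (by omega)
      simp only [Nat.add_sub_cancel] at H1 H2
      push_cast at H1 H2
      -- H1 : (m+2) * fu * fw ≤ (m+1) * fv^2 ; H2 : (m+3) * fv * fx ≤ (m+2) * fw^2
      have hu := hf0 m
      have hv := hf0 (m+1)
      have hw := hf0 (m+2)
      have hx := hf0 (m+3)
      have P1 : ((m:ℝ)+3) * (fu * fw) ≤ ((m:ℝ)+2) * fv^2 := by
        have huw : 0 ≤ fu * fw := mul_nonneg hu hw
        nlinarith [H1]
      have Pab : ((m:ℝ)+3) * (fu * fx) ≤ ((m:ℝ)+1) * (fv * fw) := by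
        rcases eq_or_lt_of_le (mul_nonneg hv hw) with hvw | hvw
        · -- fv * fw = 0
          have hx0 : fx = 0 := by
            rcases mul_eq_zero.1 hvw.symm with h | h
            · have : ¬ (m+1 ≤ n) := fun hle => (pb_pos n p hp (m+1) hle).ne' (hfv ▸ h)
              exact hfx ▸ pb_eq_zero n p (m+3) (by omega)
            · have : ¬ (m+2 ≤ n) := fun hle => (pb_pos n p hp (m+2) hle).ne' (hfw ▸ h)
              exact hfx ▸ pb_eq_zero n p (m+3) (by omega)
          rw [hx0]
          nlinarith
        · have key : ((m:ℝ)+2)*((m:ℝ)+1) * (fv^2 * fw^2) ≥ ((m:ℝ)+2)*((m:ℝ)+3) * ((fu*fx)*(fv*fw)) := by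
            nlinarith [mul_le_mul_of_nonneg_left H2 (mul_nonneg (mul_nonneg hu hw) (by positivity : (0:ℝ) ≤ (m:ℝ)+2)),
              mul_le_mul_of_nonneg_left H1 (mul_nonneg (mul_nonneg hv hx) (by positivity : (0:ℝ) ≤ (m:ℝ)+3)),
              mul_nonneg hu hw, mul_nonneg hv hx]
          have hm2 : (0:ℝ) < (m:ℝ)+2 := by positivity
          have key2 : ((m:ℝ)+1) * (fv*fw) * (fv*fw) ≥ ((m:ℝ)+3) * (fu*fx) * (fv*fw) := by nlinarith
          exact le_of_mul_le_mul_right (by linarith) hvw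
      -- now expand g
      have g1 : pbPMF (n+1) p (m+1) = q * fu + (1-q) * fv := pb_rec n p m
      have g2 : pbPMF (n+1) p (m+2) = q * fv + (1-q) * fw := pb_rec n p (m+1)
      have g3 : pbPMF (n+1) p (m+3) = q * fw + (1-q) * fx := pb_rec n p (m+2)
      have hgoal : (m+2 : ℕ) - 1 = m+1 := rfl
      have hb : (0:ℝ) ≤ 1 - q := by linarith
      have P3 : ((m:ℝ)+2+1)*(fv*fx) ≤ ((m:ℝ)+2)*fw^2 := by
        rw [hfv, hfw, hfx, show m+3 = m+2+1 from rfl]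
        linarith [H2]
      have P1' : ((m:ℝ)+2+1)*(fu*fw) ≤ ((m:ℝ)+2)*fv^2 := by linarith [P1]
      have P2' : ((m:ℝ)+2+1)*(fu*fx) ≤ ((m:ℝ)+2-1)*(fv*fw) := by linarith [Pab]
      have key := step_ineq ((m:ℝ)+2) q (1-q) fu fv fw fx hq0.le hb P1' P2' P3
      rw [hgoal, g1, g2, g3]
      push_cast
      linarith [key]


theorem stmt_15 (n : ℕ) (p : ℕ → ℝ) (hp : ∀ i, 0 ≤ p i ∧ p i ≤ 1) :
    ∀ k : ℕ, 1 ≤ k →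
      ((k + 1 : ℝ)) * pbPMF n p (k - 1) * pbPMF n p (k + 1) ≤ (k : ℝ) * (pbPMF n p k) ^ 2 := by
  intro k hk
  set pe : ℝ → ℕ → ℝ := fun ε i => (1 - ε) * p i + ε / 2 with hpe
  have hc : ∀ j : ℕ, Continuous fun ε : ℝ => pbPMF n (pe ε) j := by
    intro j
    unfold pbPMF
    apply continuous_finset_sum
    intro A _
    exact (continuous_finset_prod _ fun i _ => by simp only [hpe]; fun_prop).mul
      (continuous_finset_prod _ fun i _ => by simp only [hpe]; fun_prop)
  set F : ℝ → ℝ := fun ε =>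
    (k : ℝ) * (pbPMF n (pe ε) k) ^ 2 - ((k + 1 : ℝ)) * pbPMF n (pe ε) (k - 1) * pbPMF n (pe ε) (k + 1)
    with hF
  have hFc : Continuous F := by
    apply Continuous.sub
    · exact continuous_const.mul ((hc k).pow 2)
    · exact (continuous_const.mul (hc (k-1))).mul (hc (k+1))
  have hF0 : ∀ ε ∈ Set.Ioo (0:ℝ) 1, 0 ≤ F ε := by
    intro ε hε
    have hpe' : ∀ i, 0 < pe ε i ∧ pe ε i < 1 := by
      intro i
      constructor
      · have := (hp i).1
        have h1 : 0 ≤ (1 - ε) * p i := mul_nonneg (by linarith [hε.2]) this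
        simp only [hpe]; nlinarith [hε.1]
      · have := (hp i).2
        have h1 : (1 - ε) * p i ≤ 1 - ε := by nlinarith [hε.2]
        simp only [hpe]; nlinarith [hε.1]
    have := ulc_interior n (pe ε) hpe' k hk
    simp only [hF]
    linarith
  have hpe0 : pe 0 = p := by funext i; simp [hpe]
  have htend : Filter.Tendsto F (nhdsWithin 0 (Set.Ioo (0:ℝ) 1)) (nhds (F 0)) :=
    hFc.continuousWithinAt
  have hne : (nhdsWithin (0:ℝ) (Set.Ioo (0:ℝ) 1)).NeBot := by
    apply mem_closure_iff_nhdsWithin_neBot.mp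
    rw [closure_Ioo one_ne_zero.symm]
    exact ⟨le_refl 0, zero_le_one⟩
  have hge : 0 ≤ F 0 := by
    apply ge_of_tendsto htend
    filter_upwards [self_mem_nhdsWithin] with ε hε
    exact hF0 ε hε
  simp only [hF, hpe0] at hge
  linarith
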